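/- Let R be a nonempty finite set of strict pairwise comparisons over subsets of the finite set F and let θ be a finite family of subsets of F. If U_R^θ = ∅ (R cannot be represented by a θ-additive model), then there exists a certificate λ for θ with respect to R, i.e., λ : R → ℝ with λ(A,B) ≥ 0 for all (A,B) ∈ R, Σ_{(A,B)∈R} λ(A,B) > 0, and Σ_{(A,B)∈R} λ(A,B)(I_A(S) − I_B(S)) = 0 for every S ∈ θ. -/

import Mathlib

/-- The indicator `I_A(S) = 1` if `S ⊆ A`, else `0`. -/
def ind {α : Type*} [DecidableEq α] (A S : Finset α) : ℝ :=
  if S ⊆ A then 1 else 0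

/-- The θ-additive utility: `f_{θ,u}(A) = Σ_{S ∈ θ} I_A(S) u(S)`. -/
def util {α : Type*} [DecidableEq α] (θ : Finset (Finset α)) (u : Finset α → ℝ)
    (A : Finset α) : ℝ :=
  ∑ S ∈ θ, ind A S * u S

/-- `U_R^θ`: the set of utility parameter functions compatible with every
strict preference in `R`. -/
def compatSet {α : Type*} [DecidableEq α] (R : Finset (Finset α × Finset α))
    (θ : Finset (Finset α)) : Set (Finset α → ℝ) :=
  {u | ∀ p ∈ R, util θ u p.2 < util θ u p.1}

/-- If `R` is nonempty and cannot be represented by a `θ`-additive model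
(`U_R^θ = ∅`), then there exists a certificate `λ` for `θ` with respect
to `R`. -/
theorem stmt14 {α : Type*} [Fintype α] [DecidableEq α]
    (R : Finset (Finset α × Finset α)) (hR : R.Nonempty)
    (θ : Finset (Finset α)) (hempty : compatSet R θ = ∅) :
    ∃ lam : Finset α × Finset α → ℝ,
      (∀ p ∈ R, 0 ≤ lam p) ∧ (0 < ∑ p ∈ R, lam p) ∧
        (∀ S ∈ θ, ∑ p ∈ R, lam p * (ind p.1 S - ind p.2 S) = 0) := by
  classical
  -- the "difference" vectors
  set c : Finset α × Finset α → (Finset α → ℝ) :=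
    fun p S => if S ∈ θ then ind p.1 S - ind p.2 S else 0 with hc
  by_cases h0 : (0 : Finset α → ℝ) ∈ convexHull ℝ (↑(R.image c) : Set (Finset α → ℝ))
  · -- 0 is a convex combination of the vectors `c p`: extract a certificate
    rw [Finset.convexHull_eq] at h0
    obtain ⟨w, hw0, hw1, hwc⟩ := h0
    set T := R.image c with hT
    set n : (Finset α → ℝ) → ℕ := fun y => (R.filter (fun q => c q = y)).card with hn
    have hnpos : ∀ y ∈ T, 0 < n y := by
      intro y hy
      obtain ⟨p, hp, hpy⟩ := Finset.mem_image.mp hy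
      exact Finset.card_pos.mpr ⟨p, Finset.mem_filter.mpr ⟨hp, hpy⟩⟩
    refine ⟨fun p => w (c p) / n (c p), ?_, ?_, ?_⟩
    · intro p hp
      have : 0 ≤ w (c p) := hw0 _ (Finset.mem_image_of_mem c hp)
      positivity
    · have : ∑ p ∈ R, w (c p) / n (c p) = ∑ y ∈ T, n y • (w y / n y) := by
        exact Finset.sum_comp (fun y => w y / (n y : ℝ)) c
      rw [this]
      have : ∑ y ∈ T, n y • (w y / n y) = ∑ y ∈ T, w y := by
        refine Finset.sum_congr rfl fun y hy => ?_
        have hny : (n y : ℝ) ≠ 0 := Nat.cast_ne_zero.mpr (hnpos y hy).ne'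
        rw [nsmul_eq_mul]; field_simp
      rw [this, hw1]; norm_num
    · intro S hS
      -- rewrite the summand via `c`
      have hrw : ∀ p ∈ R, w (c p) / n (c p) * (ind p.1 S - ind p.2 S)
          = (fun y => w y / n y * y S) (c p) := by
        intro p hp
        simp only [hc, if_pos hS]
      rw [Finset.sum_congr rfl hrw,
        Finset.sum_comp (fun y => w y / (n y : ℝ) * y S) c]
      have hcm : ∑ y ∈ T, w y • y = 0 := by
        rw [← Finset.centerMass_eq_of_sum_1 _ _ hw1]
        exact hwc
      have hcmS : ∑ y ∈ T, w y * y S = 0 := by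
        have := congrFun hcm S
        simpa [Finset.sum_apply] using this
      rw [← hcmS]
      refine Finset.sum_congr rfl fun y hy => ?_
      have hny : (n y : ℝ) ≠ 0 := Nat.cast_ne_zero.mpr (hnpos y hy).ne'
      rw [nsmul_eq_mul]; field_simp; simp only [hn]; ring
  · -- otherwise separate 0 from the convex hull and contradict emptiness
    exfalso
    have hconv : Convex ℝ (convexHull ℝ (↑(R.image c) : Set (Finset α → ℝ))) :=
      convex_convexHull ℝ _
    have hclosed : IsClosed (convexHull ℝ (↑(R.image c) : Set (Finset α → ℝ))) :=
      (Finset.finite_toSet _).isClosed_convexHull (𝕜 := ℝ)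
    obtain ⟨f, u, hfu, hub⟩ := geometric_hahn_banach_point_closed hconv hclosed h0
    have hupos : 0 < u := by simpa using hfu
    set v : Finset α → ℝ := fun S => f (Pi.single S 1) with hv
    have hvmem : v ∈ compatSet R θ := by
      intro p hp
      have hcp : c p ∈ convexHull ℝ (↑(R.image c) : Set (Finset α → ℝ)) :=
        subset_convexHull ℝ _ (Finset.mem_coe.mpr (Finset.mem_image_of_mem c hp))
      have hfcp : 0 < f (c p) := hupos.trans (hub _ hcp)
      -- expand f (c p)
      have hexp : f (c p) = ∑ S : Finset α, c p S * v S := by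
        conv_lhs => rw [pi_eq_sum_univ (c p)]
        rw [map_sum]
        refine Finset.sum_congr rfl fun S _ => ?_
        rw [map_smul]
        simp only [smul_eq_mul, hv]
        congr 1
        congr 1
        ext j
        simp [Pi.single_apply, eq_comm]
      have hsum : ∑ S : Finset α, c p S * v S
          = ∑ S ∈ θ, (ind p.1 S - ind p.2 S) * v S := by
        rw [← Finset.sum_subset (Finset.subset_univ θ)]
        · refine Finset.sum_congr rfl fun S hS => by simp [hc, if_pos hS]
        · intro S _ hS
          simp [hc, if_neg hS]
      have : 0 < util θ v p.1 - util θ v p.2 := by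
        have : util θ v p.1 - util θ v p.2
            = ∑ S ∈ θ, (ind p.1 S - ind p.2 S) * v S := by
          rw [util, util, ← Finset.sum_sub_distrib]
          refine Finset.sum_congr rfl fun S _ => by ring
        rw [this, ← hsum, ← hexp]
        exact hfcp
      linarith
    rw [hempty] at hvmem
    exact hvmem
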